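/- Let W = [w_{ij}] be an n×n real weight-balanced matrix (for every i, ∑_j w_{ij} = ∑_j w_{ji}), let g : ℝ^m → ℝ^m be any map, and let z_1,…,z_n, G_1,…,G_n : ℝ → ℝ^m be differentiable functions such that for every node i and every time t: z_i'(t) = −∑_{j=1}^n w_{ij} ( g(z_i(t)) − g(z_j(t)) ) + G_i'(t), and such that the initialization satisfies ∑_{i=1}^n z_i(0) = ∑_{i=1}^n G_i(0). Then for all t ≥ 0, ∑_{i=1}^n z_i(t) = ∑_{i=1}^n G_i(t); i.e., the auxiliary variables track the sum of the local gradients at all times. -/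

import Mathlib

/-- Over a weight-balanced network, the gradient-tracking dynamics
`z_i' = -∑_j w_ij (g(z_i) - g(z_j)) + G_i'` together with the initialization
`∑ i, z_i(0) = ∑ i, G_i(0)` implies `∑ i, z_i(t) = ∑ i, G_i(t)` for all `t ≥ 0`:
the auxiliary variables track the sum of the local gradients at all times. -/
theorem gradient_tracking_sum_invariant (n m : ℕ)
    (W : Matrix (Fin n) (Fin n) ℝ)
    (hWB : ∀ i, ∑ j, W i j = ∑ j, W j i)
    (g : (Fin m → ℝ) → (Fin m → ℝ))
    (z G : Fin n → ℝ → (Fin m → ℝ))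
    (hz : ∀ i, Differentiable ℝ (z i)) (hG : ∀ i, Differentiable ℝ (G i))
    (hdyn : ∀ i t, deriv (z i) t
      = -∑ j, W i j • (g (z i t) - g (z j t)) + deriv (G i) t)
    (hinit : ∑ i, z i 0 = ∑ i, G i 0) :
    ∀ t : ℝ, 0 ≤ t → ∑ i, z i t = ∑ i, G i t := by
  set h : ℝ → (Fin m → ℝ) := fun t => ∑ i, z i t - ∑ i, G i t with hh
  have hdiff : Differentiable ℝ h := by
    apply Differentiable.sub
    · exact Differentiable.fun_sum fun i _ => hz i
    · exact Differentiable.fun_sum fun i _ => hG i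
  have hderiv : ∀ t, deriv h t = 0 := by
    intro t
    have h1 : deriv h t = (∑ i, deriv (z i) t) - ∑ i, deriv (G i) t := by
      rw [hh]
      rw [deriv_fun_sub ((Differentiable.fun_sum fun i _ => hz i) t)
        ((Differentiable.fun_sum fun i _ => hG i) t)]
      congr 1
      · exact deriv_fun_sum fun i _ => (hz i).differentiableAt
      · exact deriv_fun_sum fun i _ => (hG i).differentiableAt
    rw [h1]
    have key : ∑ i, ∑ j, W i j • (g (z i t) - g (z j t)) = 0 := by
      have : ∑ i, ∑ j, W i j • (g (z i t) - g (z j t))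
          = (∑ i, ∑ j, W i j • g (z i t)) - ∑ i, ∑ j, W i j • g (z j t) := by
        simp [smul_sub, Finset.sum_sub_distrib]
      rw [this, Finset.sum_comm (s := Finset.univ) (t := Finset.univ)
        (f := fun i j => W i j • g (z j t))]
      have e1 : ∀ i : Fin n, ∑ j, W i j • g (z i t) = (∑ j, W i j) • g (z i t) := by
        intro i; rw [Finset.sum_smul]
      have e2 : ∀ j : Fin n, ∑ i, W i j • g (z j t) = (∑ i, W i j) • g (z j t) := by
        intro j; rw [Finset.sum_smul]
      simp only [e1, e2]
      rw [sub_eq_zero]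
      exact Finset.sum_congr rfl fun i _ => by rw [hWB i]
    calc (∑ i, deriv (z i) t) - ∑ i, deriv (G i) t
        = (∑ i, (-∑ j, W i j • (g (z i t) - g (z j t)) + deriv (G i) t))
          - ∑ i, deriv (G i) t := by
          congr 1; exact Finset.sum_congr rfl fun i _ => hdyn i t
      _ = -∑ i, ∑ j, W i j • (g (z i t) - g (z j t)) := by
          rw [Finset.sum_add_distrib, Finset.sum_neg_distrib]; abel
      _ = 0 := by rw [key]; simp
  intro t _
  have := is_const_of_deriv_eq_zero hdiff hderiv t 0
  have h0 : h 0 = 0 := by simp [hh, hinit]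
  have ht : h t = 0 := by rw [this, h0]
  have := sub_eq_zero.mp ht
  exact this
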